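/- arXiv:1710.05936 — 3 statements merged into one kernel-verified Lean document; each statement's English description precedes it below -/
import Mathlib

section
/- Let a > 1, λ ≥ 0, μ ≥ 1, λ ≠ μ, r ≥ 1. If a k-edge-coloring of G = K(a^{(p)};λ,μ) can be embedded into a Hamiltonian decomposition of G* = K(a^{(p+r)};λ,μ), then: (i) k = (λ(a−1) + μa(p+r−1))/2; (ii) λ ≤ μa(p+r−1); (iii) every component of each color class G(j) is a path (possibly of length 0), 1 ≤ j ≤ k; and (iv) the number of components ω_j of G(j) satisfies ω_j ≤ ar for 1 ≤ j ≤ k. -/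
open Finset

/-- The vertex set of `K(a^{(p)};λ,μ)`: `p` parts, each of size `a`. -/
abbrev KV (p a : ℕ) := Fin p × Fin a

/-- The edge multiplicity function of `K(a^{(p)};λ,μ)`: vertices in the same
part are joined by `lam` edges, vertices in different parts by `mu` edges. -/
def Kmult (p a lam mu : ℕ) (u v : KV p a) : ℕ :=
  if u = v then 0 else if u.1 = v.1 then lam else mu

/-- The (simple) support graph of a loopless multigraph given by its
multiplicity function `w`. -/
def supp {V : Type} (w : V → V → ℕ) : SimpleGraph V where
  Adj u v := u ≠ v ∧ (0 < w u v ∨ 0 < w v u)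
  symm := by
    constructor
    intro u v h
    exact ⟨h.1.symm, h.2.symm⟩
  loopless := by
    constructor
    intro v h
    exact h.1 rfl

/-- The degree of a vertex in a loopless multigraph given by its multiplicity
function. -/
def mdeg {V : Type} [Fintype V] (w : V → V → ℕ) (v : V) : ℕ := ∑ u, w v u

/-- The number of connected components of the (spanning) subgraph given by the
multiplicity function `w`. -/
noncomputable def numComp {V : Type} (w : V → V → ℕ) : ℕ :=
  Nat.card (supp w).ConnectedComponent

/-- Every component of the multigraph given by `w` is a path (possibly of
length `0`): no multiple edges, no cycles, and all degrees at most `2`. -/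
def IsPathForest {V : Type} [Fintype V] (w : V → V → ℕ) : Prop :=
  (∀ u v, w u v ≤ 1) ∧ (supp w).IsAcyclic ∧ (∀ v, mdeg w v ≤ 2)

/-- The loopless multigraph given by `w` is a Hamiltonian cycle of the complete
vertex set `V`: it is connected (and spanning) and every vertex has degree `2`. -/
def IsHamCycle {V : Type} [Fintype V] (w : V → V → ℕ) : Prop :=
  (supp w).Connected ∧ ∀ v, mdeg w v = 2

/-- `c` is a `k`-edge-coloring of `K(a^{(p)};λ,μ)`, recorded by the (symmetric)
multiplicity functions `c j` of its color classes, which partition the edges. -/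
def KColoring (p a lam mu k : ℕ) (c : Fin k → KV p a → KV p a → ℕ) : Prop :=
  (∀ j u v, c j u v = c j v u) ∧ (∀ u v, ∑ j, c j u v = Kmult p a lam mu u v)

/-- The canonical identification of the vertices of `K(a^{(p)};λ,μ)` with the
vertices of the first `p` parts of `K(a^{(p+r)};λ,μ)`. -/
def KVemb (p a r : ℕ) (x : KV p a) : KV (p + r) a := (Fin.castAdd r x.1, x.2)

/-- The `k`-edge-coloring `c` of `K(a^{(p)};λ,μ)` can be embedded into a
Hamiltonian decomposition of `K(a^{(p+r)};λ,μ)`: the coloring extends to a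
`k`-edge-coloring of `K(a^{(p+r)};λ,μ)` all of whose color classes are
Hamiltonian cycles. -/
def EmbedsInHamDecomp (p a lam mu r k : ℕ)
    (c : Fin k → KV p a → KV p a → ℕ) : Prop :=
  ∃ c' : Fin k → KV (p + r) a → KV (p + r) a → ℕ,
    KColoring (p + r) a lam mu k c' ∧
    (∀ j, IsHamCycle (c' j)) ∧
    (∀ j u v, c' j (KVemb p a r u) (KVemb p a r v) = c j u v)

/-- Twice the number of pure edges of `w` lying inside part `i`. -/
def purePairSum (p a : ℕ) (w : KV p a → KV p a → ℕ) (i : Fin p) : ℕ :=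
  ∑ x : Fin a, ∑ y : Fin a, w (i, x) (i, y)

/-- Twice the number of mixed edges of `w` (edges joining different parts). -/
def mixedPairSum (p a : ℕ) (w : KV p a → KV p a → ℕ) : ℕ :=
  ∑ u : KV p a, ∑ v : KV p a, if u.1 ≠ v.1 then w u v else 0


section Helpers

lemma reach_closed {V : Type} {G : SimpleGraph V} {S : Set V}
    (hS : ∀ ⦃x y⦄, x ∈ S → G.Adj x y → y ∈ S) {x y : V} (hx : x ∈ S)
    (h : G.Reachable x y) : y ∈ S := by
  have key : ∀ {u v : V} (_ : G.Walk u v), u ∈ S → v ∈ S := by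
    intro u v p
    induction p with
    | nil => exact id
    | cons h' p ih => exact fun hu => ih (hS hu h')
  exact h.elim fun p => key p hx

lemma even_square_sum {V : Type} (s : Finset V) (w : V → V → ℕ)
    (hsym : ∀ u v, w u v = w v u) (hdiag : ∀ u, w u u = 0) :
    Even (∑ u ∈ s, ∑ v ∈ s, w u v) := by
  have key : (∑ x ∈ s ×ˢ s, ((w x.1 x.2 : ℕ) : ZMod 2)) = 0 := by
    apply Finset.sum_involution (fun x _ => x.swap)
    · intro a _
      show ((w a.1 a.2 : ℕ) : ZMod 2) + ((w a.2 a.1 : ℕ) : ZMod 2) = 0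
      rw [hsym a.2 a.1]
      exact CharTwo.add_self_eq_zero _
    · intro a _ hne
      intro hswap
      apply hne
      have h1 : a.1 = a.2 := by
        have := congrArg Prod.fst hswap
        simpa [Prod.swap] using this.symm
      show ((w a.1 a.2 : ℕ) : ZMod 2) = 0
      rw [h1, hdiag]; simp
    · intro a _; rfl
    · intro a ha
      simp only [Finset.mem_product] at ha ⊢
      exact ⟨ha.2, ha.1⟩
  rw [even_iff_two_dvd]
  rw [← ZMod.natCast_eq_zero_iff]
  have : ((∑ u ∈ s, ∑ v ∈ s, w u v : ℕ) : ZMod 2)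
      = ∑ x ∈ s ×ˢ s, ((w x.1 x.2 : ℕ) : ZMod 2) := by
    rw [← Finset.sum_product']
    push_cast
    rfl
  rw [this, key]

lemma path_getVert_one_ne_end {V : Type} {G : SimpleGraph V} {u v : V}
    (P : G.Walk u v) (hP : P.IsPath) (hlen : 2 ≤ P.length) : P.getVert 1 ≠ v := by
  cases P with
  | nil => simp at hlen
  | @cons _ b _ h2 P2 =>
    show P2.getVert 0 ≠ _
    rw [SimpleGraph.Walk.getVert_zero]
    intro heq
    subst heq
    have hP2 : P2.IsPath := hP.of_cons
    rw [SimpleGraph.Walk.isPath_iff_eq_nil] at hP2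
    subst hP2
    simp at hlen

lemma cycle_two_nbrs {V : Type} {G : SimpleGraph V} {x : V}
    (q : G.Walk x x) (hq : q.IsCycle) :
    ∃ y z, y ≠ z ∧ y ∈ q.support ∧ z ∈ q.support ∧ G.Adj x y ∧ G.Adj x z := by
  cases q with
  | nil => exact absurd hq (SimpleGraph.Walk.IsCycle.not_of_nil)
  | @cons _ b _ h p =>
    have hq3 := hq.three_le_length
    rw [SimpleGraph.Walk.length_cons] at hq3
    have hplen : 2 ≤ p.length := by omega
    have hpath : p.IsPath := ((SimpleGraph.Walk.cons_isCycle_iff p h).mp hq).1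
    have hprev : p.reverse.IsPath := hpath.reverse
    have hrlen : 2 ≤ p.reverse.length := by rwa [SimpleGraph.Walk.length_reverse]
    have hnotnil : ¬ p.reverse.Nil := by
      rw [SimpleGraph.Walk.not_nil_iff_lt_length]; omega
    refine ⟨b, p.reverse.getVert 1, ?_, ?_, ?_, h, p.reverse.adj_snd hnotnil⟩
    · exact fun hbz => (path_getVert_one_ne_end p.reverse hprev hrlen) hbz.symm
    · simp [SimpleGraph.Walk.support_cons]
    · have : p.reverse.getVert 1 ∈ p.reverse.support := by
        rw [SimpleGraph.Walk.mem_support_iff_exists_getVert]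
        exact ⟨1, rfl, by omega⟩
      rw [SimpleGraph.Walk.support_reverse, List.mem_reverse] at this
      simp [SimpleGraph.Walk.support_cons, this]

lemma supp_adj_pos {V : Type} {w : V → V → ℕ} (hsym : ∀ u v, w u v = w v u)
    {u v : V} (h : (supp w).Adj u v) : 0 < w u v := by
  rcases h.2 with h' | h'
  · exact h'
  · rw [hsym u v]; exact h'

lemma cycle_support_closed {V : Type} [Fintype V] {w : V → V → ℕ}
    (hsym : ∀ u v, w u v = w v u) (hdeg : ∀ v, mdeg w v ≤ 2) {x : V}
    (q : (supp w).Walk x x) (hq : q.IsCycle) {u : V} (hu : u ∈ q.support) :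
    mdeg w u = 2 ∧ ∀ ⦃y⦄, (supp w).Adj u y → y ∈ q.support := by
  classical
  have hmemrot : ∀ t, t ∈ (q.rotate u hu).support ↔ t ∈ q.support := by
    intro t
    rw [← SimpleGraph.Walk.mem_verts_toSubgraph, ← SimpleGraph.Walk.mem_verts_toSubgraph,
      SimpleGraph.Walk.toSubgraph_rotate]
  obtain ⟨y1, z1, hne, hy1, hz1, ha1, ha2⟩ := cycle_two_nbrs (q.rotate u hu) (hq.rotate hu)
  have hw1 : 0 < w u y1 := supp_adj_pos hsym ha1
  have hw2 : 0 < w u z1 := supp_adj_pos hsym ha2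
  constructor
  · have h2 : ({y1, z1} : Finset V).card • 1 ≤ ∑ t ∈ {y1, z1}, w u t := by
      apply Finset.card_nsmul_le_sum
      intro t ht
      rcases Finset.mem_insert.mp ht with rfl | ht
      · omega
      · rw [Finset.mem_singleton.mp ht]; omega
    rw [Finset.card_insert_of_notMem (by simpa using hne), Finset.card_singleton] at h2
    have h3 : ∑ t ∈ {y1, z1}, w u t ≤ mdeg w u :=
      Finset.sum_le_sum_of_subset (Finset.subset_univ _)
    have := hdeg u
    simp only [smul_eq_mul] at h2
    omega
  · intro y hy
    by_contra hyn
    have hwy : 0 < w u y := supp_adj_pos hsym hy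
    have hy1' : y ≠ y1 := by
      rintro rfl; exact hyn ((hmemrot y).mp hy1)
    have hz1' : y ≠ z1 := by
      rintro rfl; exact hyn ((hmemrot y).mp hz1)
    have hcard : ({y, y1, z1} : Finset V).card = 3 := by
      rw [Finset.card_insert_of_notMem (by simp [hy1', hz1']),
        Finset.card_insert_of_notMem (by simpa using hne), Finset.card_singleton]
    have h2 : ({y, y1, z1} : Finset V).card • 1 ≤ ∑ t ∈ {y, y1, z1}, w u t := by
      apply Finset.card_nsmul_le_sum
      intro t ht
      simp only [Finset.mem_insert, Finset.mem_singleton] at ht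
      rcases ht with rfl | rfl | rfl <;> omega
    have h3 : ∑ t ∈ {y, y1, z1}, w u t ≤ mdeg w u :=
      Finset.sum_le_sum_of_subset (Finset.subset_univ _)
    have := hdeg u
    rw [hcard] at h2
    simp only [smul_eq_mul] at h2
    omega

lemma mult_le_one {V : Type} [Fintype V] (w : V → V → ℕ)
    (hsym : ∀ u v, w u v = w v u) (hham : IsHamCycle w)
    (hcard : 3 ≤ Fintype.card V) : ∀ u v, w u v ≤ 1 := by
  classical
  intro u v
  by_contra hcon
  have h2 : 2 ≤ w u v := by omega
  have key : ∀ x x' : V, 2 ≤ w x x' → ∀ t, t ≠ x' → w x t = 0 := by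
    intro x x' hxx' t ht
    have hsum : ∑ s ∈ Finset.univ.erase x', w x s + w x x' = mdeg w x :=
      Finset.sum_erase_add _ _ (Finset.mem_univ _)
    have hd := hham.2 x
    have h0 : ∑ s ∈ Finset.univ.erase x', w x s = 0 := by omega
    exact (Finset.sum_eq_zero_iff.mp h0) t (Finset.mem_erase.mpr ⟨ht, Finset.mem_univ _⟩)
  have hvu : 2 ≤ w v u := by rw [hsym v u]; omega
  set S : Set V := {u, v} with hS
  have hclosed : ∀ ⦃x y⦄, x ∈ S → (supp w).Adj x y → y ∈ S := by
    intro x y hx hadj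
    have hpos : 0 < w x y := supp_adj_pos hsym hadj
    rcases hx with rfl | rfl
    · by_contra hyv
      have hyv' : y ≠ v := by rintro rfl; exact hyv (Or.inr rfl)
      have := key x v h2 y hyv'
      omega
    · by_contra hyu
      have hyu' : y ≠ u := by rintro rfl; exact hyu (Or.inl rfl)
      have := key x u hvu y hyu'
      omega
  have hcompl : ∃ z : V, z ∉ S := by
    have hcard2 : ({u, v} : Finset V).card ≤ 2 := (Finset.card_insert_le _ _).trans (by simp)
    have hpos : 0 < (({u, v} : Finset V)ᶜ).card := by
      rw [Finset.card_compl]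
      omega
    obtain ⟨z, hz⟩ := Finset.card_pos.mp hpos
    refine ⟨z, ?_⟩
    have := Finset.mem_compl.mp hz
    simpa [hS] using this
  obtain ⟨z, hz⟩ := hcompl
  exact hz (reach_closed hclosed (Or.inl rfl) (hham.1.preconnected u z))

end Helpers

/-- **Necessity of the conditions of Theorem 2.** If a `k`-edge-coloring of
`G = K(a^{(p)};λ,μ)` (with `a > 1`, `λ ≥ 0`, `μ ≥ 1`, `λ ≠ μ`, `r ≥ 1`) can be
embedded into a Hamiltonian decomposition of `K(a^{(p+r)};λ,μ)`, then
(i) `k = (λ(a−1)+μa(p+r−1))/2`, (ii) `λ ≤ μa(p+r−1)`, (iii) every component of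
each color class `G(j)` is a path (possibly of length 0), and (iv) the number
of components `ω_j` of `G(j)` satisfies `ω_j ≤ ar`. -/
theorem necessity_of_embedding_conditions
    (a p lam mu r k : ℕ) (ha : 1 < a) (hp : 1 ≤ p) (hmu : 1 ≤ mu)
    (hlm : lam ≠ mu) (hr : 1 ≤ r)
    (c : Fin k → KV p a → KV p a → ℕ) (hc : KColoring p a lam mu k c)
    (hemb : EmbedsInHamDecomp p a lam mu r k c) :
    2 * k = lam * (a - 1) + mu * a * (p + r - 1) ∧
      lam ≤ mu * a * (p + r - 1) ∧
      (∀ j, IsPathForest (c j)) ∧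
      (∀ j, numComp (c j) ≤ a * r) := by
  classical
  obtain ⟨hsymc, hsumc⟩ := hc
  obtain ⟨c', ⟨hsym', hsum'⟩, hham, hres⟩ := hemb
  have hpr2 : 2 ≤ p + r := by omega
  -- diagonal entries vanish
  have hd' : ∀ (j : Fin k) u, c' j u u = 0 := by
    intro j u
    have h0 : ∑ j, c' j u u = 0 := by rw [hsum' u u]; simp [Kmult]
    exact Finset.sum_eq_zero_iff.mp h0 j (mem_univ j)
  have hdm' : ∀ (j : Fin k) v, mdeg (c' j) v = 2 := fun j => (hham j).2
  -- the degree of every vertex of K(a^{p+r}) is lam(a-1) + mu*a*(p+r-1)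
  have hKdeg : ∀ v : KV (p+r) a, mdeg (Kmult (p+r) a lam mu) v
      = lam * (a-1) + mu * a * (p + r - 1) := by
    intro v
    unfold mdeg
    rw [Fintype.sum_prod_type]
    have hinner : ∀ i : Fin (p+r), ∑ x : Fin a, Kmult (p+r) a lam mu v (i, x)
        = if v.1 = i then lam * (a-1) else mu * a := by
      intro i
      by_cases hvi : v.1 = i
      · rw [if_pos hvi]
        have hterm : ∀ x : Fin a, Kmult (p+r) a lam mu v (i, x)
            = if x = v.2 then 0 else lam := by
          intro x
          unfold Kmult
          by_cases hx : x = v.2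
          · rw [if_pos hx, if_pos (Prod.ext hvi hx.symm)]
          · rw [if_neg hx, if_neg, if_pos hvi]
            intro hveq
            exact hx (congrArg Prod.snd hveq).symm
        rw [Finset.sum_congr rfl (fun x _ => hterm x)]
        rw [← Finset.sum_erase_add _ _ (Finset.mem_univ v.2), if_pos rfl]
        have : ∀ x ∈ Finset.univ.erase v.2, (if x = v.2 then 0 else lam) = lam := by
          intro x hx
          rw [if_neg (Finset.mem_erase.mp hx).1]
        rw [Finset.sum_congr rfl this, Finset.sum_const,
          Finset.card_erase_of_mem (Finset.mem_univ _), Finset.card_univ, Fintype.card_fin]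
        simp [mul_comm]
      · rw [if_neg hvi]
        have hterm : ∀ x : Fin a, Kmult (p+r) a lam mu v (i, x) = mu := by
          intro x
          unfold Kmult
          rw [if_neg, if_neg hvi]
          intro hveq
          exact hvi (congrArg Prod.fst hveq)
        rw [Finset.sum_congr rfl (fun x _ => hterm x), Finset.sum_const,
          Finset.card_univ, Fintype.card_fin]
        simp [mul_comm]
    rw [Finset.sum_congr rfl (fun i _ => hinner i)]
    rw [← Finset.sum_erase_add _ _ (Finset.mem_univ v.1), if_pos rfl]
    have : ∀ i ∈ Finset.univ.erase v.1, (if v.1 = i then lam * (a-1) else mu * a) = mu * a := by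
      intro i hi
      rw [if_neg (Ne.symm (Finset.mem_erase.mp hi).1)]
    rw [Finset.sum_congr rfl this, Finset.sum_const,
      Finset.card_erase_of_mem (Finset.mem_univ _), Finset.card_univ, Fintype.card_fin]
    have hre : (p + r - 1) • (mu * a) = mu * a * (p + r - 1) := by
      simp [smul_eq_mul, mul_comm]
    rw [hre, Nat.add_comm]
  -- (i)
  have v0 : KV (p+r) a := (⟨0, by omega⟩, ⟨0, by omega⟩)
  have hi : 2 * k = lam * (a - 1) + mu * a * (p + r - 1) := by
    have h1 : ∑ j : Fin k, mdeg (c' j) v0 = mdeg (Kmult (p+r) a lam mu) v0 := by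
      unfold mdeg
      rw [Finset.sum_comm]
      exact Finset.sum_congr rfl fun u _ => hsum' v0 u
    rw [hKdeg] at h1
    rw [Finset.sum_congr rfl (fun j _ => hdm' j v0), Finset.sum_const, Finset.card_univ,
      Fintype.card_fin, smul_eq_mul, mul_comm] at h1
    exact h1
  -- multiplicities in the Hamiltonian cycles are at most 1
  have hcardV' : (3 : ℕ) ≤ Fintype.card (KV (p+r) a) := by
    have h4 : 2 * 2 ≤ (p + r) * a := Nat.mul_le_mul hpr2 ha
    simp only [Fintype.card_prod, Fintype.card_fin]
    omega
  have h1' : ∀ (j : Fin k) u v, c' j u v ≤ 1 :=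
    fun j => mult_le_one _ (hsym' j) (hham j) hcardV'
  -- the embedding map and its image
  have hembinj : Function.Injective (KVemb p a r) := by
    intro u v h
    have h1 := congrArg (fun t => (t.1 : ℕ)) h
    have h2 := congrArg Prod.snd h
    simp only [KVemb, Fin.coe_castAdd] at h1 h2
    exact Prod.ext (Fin.ext h1) h2
  set img : Finset (KV (p+r) a) := Finset.univ.image (KVemb p a r) with himg
  have hsum_img : ∀ (f : KV (p+r) a → ℕ),
      ∑ y ∈ img, f y = ∑ u : KV p a, f (KVemb p a r u) :=
    fun f => Finset.sum_image (fun x _ y _ h => hembinj h)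
  -- restricted degrees
  have hmdeg_img : ∀ (j : Fin k) (v : KV p a),
      mdeg (c j) v = ∑ y ∈ img, c' j (KVemb p a r v) y := by
    intro j v
    rw [hsum_img]
    exact Finset.sum_congr rfl fun u _ => (hres j v u).symm
  have hdeg : ∀ (j : Fin k) v, mdeg (c j) v ≤ 2 := by
    intro j v
    rw [hmdeg_img]
    calc ∑ y ∈ img, c' j (KVemb p a r v) y
        ≤ ∑ y : KV (p+r) a, c' j (KVemb p a r v) y :=
          Finset.sum_le_sum_of_subset (Finset.subset_univ _)
      _ = 2 := hdm' j _
  have hdiagc : ∀ (j : Fin k) u, c j u u = 0 := by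
    intro j u
    have h := hres j u u
    rw [hd'] at h
    exact h.symm
  -- a vertex outside the embedded parts
  have hzo : ∀ u : KV p a, KVemb p a r u ≠ ((⟨p, by omega⟩ : Fin (p+r)), (⟨0, by omega⟩ : Fin a)) := by
    intro u h
    have h1 := congrArg (fun t => (t.1 : ℕ)) h
    simp only [KVemb, Fin.coe_castAdd] at h1
    have := u.1.2
    omega
  set zout : KV (p+r) a := ((⟨p, by omega⟩ : Fin (p+r)), (⟨0, by omega⟩ : Fin a)) with hzout
  -- key tool: a set of vertices of G closed under edges of c j on which
  -- c j has full degree 2 must be empty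
  have hforce : ∀ (j : Fin k) (T : Set (KV p a)),
      (∀ u v, u ∈ T → 0 < c j u v → v ∈ T) →
      (∀ u ∈ T, mdeg (c j) u = 2) → T = ∅ := by
    intro j T hTc hTd
    rw [Set.eq_empty_iff_forall_notMem]
    intro u0 hu0
    have hSclosed : ∀ ⦃x y⦄, x ∈ (KVemb p a r) '' T → (supp (c' j)).Adj x y →
        y ∈ (KVemb p a r) '' T := by
      rintro x y ⟨u, hu, rfl⟩ hadj
      have hpos : 0 < c' j (KVemb p a r u) y := supp_adj_pos (hsym' j) hadj
      have hoff : ∑ t ∈ imgᶜ, c' j (KVemb p a r u) t = 0 := by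
        have hsplit := Finset.sum_add_sum_compl img (c' j (KVemb p a r u))
        have h2 := hdm' j (KVemb p a r u)
        unfold mdeg at h2
        have h3 : ∑ t ∈ img, c' j (KVemb p a r u) t = 2 := by
          rw [← hmdeg_img j u]
          exact hTd u hu
        omega
      have hyimg : y ∈ img := by
        by_contra hyi
        have := Finset.sum_eq_zero_iff.mp hoff y (Finset.mem_compl.mpr hyi)
        omega
      rw [himg, Finset.mem_image] at hyimg
      obtain ⟨v, _, rfl⟩ := hyimg
      have hcv : 0 < c j u v := by rwa [hres] at hpos
      exact ⟨v, hTc u v hu hcv, rfl⟩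
    have hmem := reach_closed hSclosed ⟨u0, hu0, rfl⟩
      (((hham j).1.preconnected) (KVemb p a r u0) zout)
    obtain ⟨v, _, hv⟩ := hmem
    exact hzo v hv
  -- acyclicity of the color classes of c
  have hacyc : ∀ j, (supp (c j)).IsAcyclic := by
    intro j x q hq
    have hclosed := fun (u : KV p a) (hu : u ∈ q.support) =>
      cycle_support_closed (hsymc j) (hdeg j) q hq hu
    have hempty : {v : KV p a | v ∈ q.support} = ∅ := by
      apply hforce j
      · intro u v hu hpos
        have huv : u ≠ v := by
          rintro rfl
          rw [hdiagc j u] at hpos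
          omega
        exact (hclosed u hu).2 ⟨huv, Or.inl hpos⟩
      · intro u hu
        exact (hclosed u hu).1
    have : x ∈ ({v : KV p a | v ∈ q.support} : Set _) := q.start_mem_support
    rw [hempty] at this
    exact this
  refine ⟨hi, ?_, ?_, ?_⟩
  · -- (ii)
    set i0 : Fin (p+r) := ⟨0, by omega⟩ with hi0
    set pimg : Finset (KV (p+r) a) :=
      Finset.univ.image (fun y : Fin a => ((i0, y) : KV (p+r) a)) with hpimg
    have hpinj : ∀ x ∈ (Finset.univ : Finset (Fin a)), ∀ y ∈ Finset.univ,
        ((i0, x) : KV (p+r) a) = (i0, y) → x = y :=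
      fun x _ y _ h => congrArg Prod.snd h
    have hin : ∀ (j : Fin k) (x : Fin a), ∑ t ∈ pimg, c' j (i0, x) t
        = ∑ y : Fin a, c' j (i0, x) (i0, y) :=
      fun j x => Finset.sum_image hpinj
    have hpure : ∀ j : Fin k,
        (∑ x : Fin a, ∑ y : Fin a, c' j (i0, x) (i0, y)) + 2 ≤ 2 * a := by
      intro j
      set S := ∑ x : Fin a, ∑ y : Fin a, c' j (i0, x) (i0, y) with hS
      have hle : ∀ x : Fin a, ∑ y : Fin a, c' j (i0, x) (i0, y) ≤ 2 := by
        intro x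
        rw [← hin]
        calc ∑ t ∈ pimg, c' j (i0, x) t
            ≤ ∑ t : KV (p+r) a, c' j (i0, x) t :=
              Finset.sum_le_sum_of_subset (Finset.subset_univ _)
          _ = 2 := hdm' j _
      have hSle : S ≤ a * 2 := by
        rw [hS]
        calc ∑ x : Fin a, ∑ y : Fin a, c' j (i0, x) (i0, y)
            ≤ ∑ _x : Fin a, 2 := Finset.sum_le_sum (fun x _ => hle x)
          _ = a * 2 := by simp [Finset.sum_const, mul_comm]
      have hSne : S ≠ a * 2 := by
        intro hSeq
        have hall : ∀ x : Fin a, ∑ y : Fin a, c' j (i0, x) (i0, y) = 2 := by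
          by_contra hnall
          push_neg at hnall
          obtain ⟨x0, hx0⟩ := hnall
          have hlt : S < ∑ _x : Fin a, 2 :=
            Finset.sum_lt_sum (fun x _ => hle x)
              ⟨x0, Finset.mem_univ _, lt_of_le_of_ne (hle x0) hx0⟩
          rw [Finset.sum_const, Finset.card_univ, Fintype.card_fin, smul_eq_mul] at hlt
          omega
        have hclosed : ∀ ⦃x y : KV (p+r) a⦄, x ∈ {t : KV (p+r) a | t.1 = i0} →
            (supp (c' j)).Adj x y → y ∈ {t : KV (p+r) a | t.1 = i0} := by
          rintro x y hx hadj
          have hx' : x.1 = i0 := hx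
          have hpos : 0 < c' j x y := supp_adj_pos (hsym' j) hadj
          have hxe : x = (i0, x.2) := Prod.ext hx' rfl
          have hoff : ∑ t ∈ pimgᶜ, c' j x t = 0 := by
            have hsplit := Finset.sum_add_sum_compl pimg (c' j x)
            have h2 := hdm' j x
            unfold mdeg at h2
            have h3 : ∑ t ∈ pimg, c' j x t = 2 := by
              rw [hxe, hin j x.2]
              exact hall x.2
            omega
          by_contra hy
          have hyc : y ∈ pimgᶜ := by
            rw [Finset.mem_compl, hpimg, Finset.mem_image]
            rintro ⟨t, _, rfl⟩
            exact hy rfl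
          have := Finset.sum_eq_zero_iff.mp hoff y hyc
          omega
        have hx00 : ((i0, (⟨0, by omega⟩ : Fin a)) : KV (p+r) a) ∈
            {t : KV (p+r) a | t.1 = i0} := rfl
        have hreach := reach_closed hclosed hx00
          (((hham j).1.preconnected) (i0, ⟨0, by omega⟩) zout)
        have hz1 : zout.1 = i0 := hreach
        have := congrArg Fin.val hz1
        simp [hzout, hi0] at this
        omega
      have hSeven : Even S := by
        apply even_square_sum Finset.univ (fun x y => c' j (i0, x) (i0, y))
        · intro u v; exact hsym' j _ _
        · intro u; exact hd' j _
      obtain ⟨t, ht⟩ := hSeven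
      omega
    -- summing the Kmult values inside part i0 over one row
    have hKrow : ∀ x : Fin a,
        ∑ y : Fin a, Kmult (p+r) a lam mu (i0, x) (i0, y) = lam * (a-1) := by
      intro x
      have hterm : ∀ y : Fin a, Kmult (p+r) a lam mu (i0, x) (i0, y)
          = if y = x then 0 else lam := by
        intro y
        unfold Kmult
        by_cases hxy : y = x
        · rw [if_pos hxy, if_pos (by rw [hxy])]
        · rw [if_pos rfl, if_neg hxy, if_neg]
          intro h
          exact hxy (congrArg Prod.snd h).symm
      rw [Finset.sum_congr rfl (fun y _ => hterm y),
        ← Finset.sum_erase_add _ _ (Finset.mem_univ x), if_pos rfl]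
      have hrest : ∀ y ∈ Finset.univ.erase x, (if y = x then 0 else lam) = lam :=
        fun y hy => if_neg (Finset.mem_erase.mp hy).1
      rw [Finset.sum_congr rfl hrest, Finset.sum_const,
        Finset.card_erase_of_mem (Finset.mem_univ _), Finset.card_univ, Fintype.card_fin]
      simp [mul_comm]
    have hsum_pure : ∑ j : Fin k, (∑ x : Fin a, ∑ y : Fin a, c' j (i0, x) (i0, y))
        = a * (lam * (a-1)) := by
      rw [Finset.sum_comm]
      have hxrow : ∀ x : Fin a, ∑ j : Fin k, ∑ y : Fin a, c' j (i0, x) (i0, y)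
          = lam * (a - 1) := by
        intro x
        rw [Finset.sum_comm]
        rw [Finset.sum_congr rfl (fun y _ => hsum' (i0, x) (i0, y))]
        exact hKrow x
      rw [Finset.sum_congr rfl (fun x _ => hxrow x), Finset.sum_const,
        Finset.card_univ, Fintype.card_fin, smul_eq_mul]
    -- put it together
    have htot : a * (lam * (a-1)) + 2 * k ≤ k * (2 * a) := by
      calc a * (lam * (a-1)) + 2 * k
          = ∑ j : Fin k, ((∑ x : Fin a, ∑ y : Fin a, c' j (i0, x) (i0, y)) + 2) := by
            rw [Finset.sum_add_distrib, hsum_pure, Finset.sum_const, Finset.card_univ,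
              Fintype.card_fin, smul_eq_mul, mul_comm k 2]
        _ ≤ ∑ _j : Fin k, (2 * a) := Finset.sum_le_sum (fun j _ => hpure j)
        _ = k * (2 * a) := by
            rw [Finset.sum_const, Finset.card_univ, Fintype.card_fin, smul_eq_mul]
    have h7 : k * (2 * a) = a * (2 * k) := by ring
    rw [h7, hi] at htot
    have h8 : a * (lam * (a - 1) + mu * a * (p + r - 1))
        = a * (lam * (a-1)) + a * (mu * a * (p + r - 1)) := by ring
    have h9 : (a - 1) * (mu * a * (p + r - 1)) + (mu * a * (p + r - 1))
        = a * (mu * a * (p + r - 1)) := by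
      have ha1 : a - 1 + 1 = a := by omega
      calc (a - 1) * (mu * a * (p + r - 1)) + (mu * a * (p + r - 1))
          = ((a - 1) + 1) * (mu * a * (p + r - 1)) := by ring
        _ = a * (mu * a * (p + r - 1)) := by rw [ha1]
    have h10 : lam * (a - 1) ≤ (a - 1) * (mu * a * (p + r - 1)) := by omega
    have h11 : lam * (a - 1) ≤ (mu * a * (p + r - 1)) * (a - 1) := by
      rw [mul_comm (mu * a * (p + r - 1))]
      exact h10
    exact Nat.le_of_mul_le_mul_right h11 (by omega)
  · -- (iii)
    intro j
    refine ⟨fun u v => ?_, hacyc j, hdeg j⟩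
    rw [← hres]
    exact h1' j _ _
  · -- (iv)
    intro j
    haveI : Finite (supp (c j)).ConnectedComponent := Quot.finite _
    letI : Fintype (supp (c j)).ConnectedComponent := Fintype.ofFinite _
    set fib : (supp (c j)).ConnectedComponent → Finset (KV p a) :=
      fun C => Finset.univ.filter (fun v => (supp (c j)).connectedComponentMk v = C) with hfib
    have key1 : ∀ C, (∑ v ∈ fib C, mdeg (c j) v) + 2 ≤ 2 * (fib C).card := by
      intro C
      obtain ⟨v0, hv0⟩ := C.exists_rep
      have hv0' : v0 ∈ fib C := by
        simp only [hfib, Finset.mem_filter]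
        exact ⟨Finset.mem_univ _, hv0⟩
      have hzero : ∀ v ∈ fib C, ∀ u, u ∉ fib C → c j v u = 0 := by
        intro v hv u hu
        by_contra h0
        have hpos : 0 < c j v u := Nat.pos_of_ne_zero h0
        have hvu : v ≠ u := by
          rintro rfl
          rw [hdiagc j v] at hpos
          omega
        have hadj : (supp (c j)).Adj v u := ⟨hvu, Or.inl hpos⟩
        apply hu
        simp only [hfib, Finset.mem_filter] at hv ⊢
        refine ⟨Finset.mem_univ _, ?_⟩
        rw [← hv.2]
        exact SimpleGraph.ConnectedComponent.eq.mpr hadj.symm.reachable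
      have hrestr2 : ∀ v ∈ fib C, mdeg (c j) v = ∑ u ∈ fib C, c j v u := by
        intro v hv
        have hsplit := Finset.sum_add_sum_compl (fib C) (c j v)
        have hz : ∑ u ∈ (fib C)ᶜ, c j v u = 0 :=
          Finset.sum_eq_zero (fun u hu => hzero v hv u (Finset.mem_compl.mp hu))
        unfold mdeg
        omega
      set SC := ∑ v ∈ fib C, ∑ u ∈ fib C, c j v u with hSC
      have hSeq : ∑ v ∈ fib C, mdeg (c j) v = SC := Finset.sum_congr rfl hrestr2
      have hle2 : ∀ v ∈ fib C, ∑ u ∈ fib C, c j v u ≤ 2 := by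
        intro v hv
        rw [← hrestr2 v hv]
        exact hdeg j v
      have hSle : SC ≤ (fib C).card * 2 := by
        calc SC ≤ ∑ _v ∈ fib C, 2 := Finset.sum_le_sum hle2
          _ = (fib C).card * 2 := by rw [Finset.sum_const, smul_eq_mul]
      have hSne : SC ≠ (fib C).card * 2 := by
        intro hSeq2
        have hall : ∀ v ∈ fib C, ∑ u ∈ fib C, c j v u = 2 := by
          by_contra hnall
          push_neg at hnall
          obtain ⟨x0, hx0m, hx0⟩ := hnall
          have hlt : SC < ∑ _v ∈ fib C, 2 :=
            Finset.sum_lt_sum hle2 ⟨x0, hx0m, lt_of_le_of_ne (hle2 x0 hx0m) hx0⟩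
          rw [Finset.sum_const, smul_eq_mul] at hlt
          omega
        have hTempty : {v : KV p a | v ∈ fib C} = ∅ := by
          apply hforce j
          · intro u v hu hpos
            have huv : u ≠ v := by
              rintro rfl
              rw [hdiagc j u] at hpos
              omega
            have hadj : (supp (c j)).Adj u v := ⟨huv, Or.inl hpos⟩
            simp only [Set.mem_setOf_eq, hfib, Finset.mem_filter] at hu ⊢
            refine ⟨Finset.mem_univ _, ?_⟩
            rw [← hu.2]
            exact SimpleGraph.ConnectedComponent.eq.mpr hadj.symm.reachable
          · intro u hu
            have h1 := hall u hu
            rw [← hrestr2 u hu] at h1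
            exact h1
        have : v0 ∈ ({} : Set (KV p a)) := hTempty ▸ (show v0 ∈ {v : KV p a | v ∈ fib C} from hv0')
        exact this
      have hEven : Even SC := even_square_sum (fib C) (c j) (hsymc j) (hdiagc j)
      have hcard1 : 1 ≤ (fib C).card := Finset.card_pos.mpr ⟨v0, hv0'⟩
      obtain ⟨t, ht⟩ := hEven
      rw [hSeq]
      omega
    -- summing over the components
    have hfibsum : ∑ C, ∑ v ∈ fib C, mdeg (c j) v = ∑ v : KV p a, mdeg (c j) v :=
      Finset.sum_fiberwise _ _ _
    have hfibcard : ∑ C, (fib C).card = p * a := by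
      have h1 : ∑ C, ∑ _v ∈ fib C, (1:ℕ) = ∑ _v : KV p a, (1:ℕ) :=
        Finset.sum_fiberwise _ _ _
      simp only [Finset.sum_const, smul_eq_mul, mul_one, Finset.card_univ,
        Fintype.card_prod, Fintype.card_fin] at h1
      exact h1
    have hmain : (∑ v : KV p a, mdeg (c j) v) + 2 * Fintype.card (supp (c j)).ConnectedComponent
        ≤ 2 * (p * a) := by
      calc (∑ v : KV p a, mdeg (c j) v) + 2 * Fintype.card (supp (c j)).ConnectedComponent
          = ∑ C, ((∑ v ∈ fib C, mdeg (c j) v) + 2) := by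
            rw [Finset.sum_add_distrib, hfibsum, Finset.sum_const, Finset.card_univ,
              smul_eq_mul, mul_comm _ 2]
        _ ≤ ∑ C, 2 * (fib C).card := Finset.sum_le_sum (fun C _ => key1 C)
        _ = 2 * (p * a) := by rw [← Finset.mul_sum, hfibcard]
    -- lower bound on the total degree of c j
    have hcardimg : img.card = p * a := by
      rw [himg, Finset.card_image_of_injective _ hembinj, Finset.card_univ,
        Fintype.card_prod, Fintype.card_fin, Fintype.card_fin]
    have hra : (p + r) * a = p * a + r * a := by ring
    have hcardcompl : imgᶜ.card = r * a := by
      rw [Finset.card_compl, hcardimg, Fintype.card_prod, Fintype.card_fin, Fintype.card_fin]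
      omega
    have hdm2 : ∀ x : KV (p+r) a, ∑ y : KV (p+r) a, c' j x y = 2 := fun x => hdm' j x
    have hE : ∑ x : KV (p+r) a, ∑ y : KV (p+r) a, c' j x y = ((p + r) * a) * 2 := by
      rw [Finset.sum_congr rfl (fun x _ => hdm2 x), Finset.sum_const, Finset.card_univ,
        Fintype.card_prod, Fintype.card_fin, Fintype.card_fin, smul_eq_mul]
    have hsplit1 : ∑ x ∈ img, ∑ y : KV (p+r) a, c' j x y
        + ∑ x ∈ imgᶜ, ∑ y : KV (p+r) a, c' j x y
        = ((p + r) * a) * 2 := by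
      rw [Finset.sum_add_sum_compl img (fun x => ∑ y : KV (p+r) a, c' j x y), hE]
    have hout : ∑ x ∈ imgᶜ, ∑ y : KV (p+r) a, c' j x y = (r * a) * 2 := by
      rw [Finset.sum_congr rfl (fun x _ => hdm2 x), Finset.sum_const, hcardcompl, smul_eq_mul]
    have hinsplit : ∑ x ∈ img, ∑ y : KV (p+r) a, c' j x y
        = (∑ x ∈ img, ∑ y ∈ img, c' j x y) + ∑ x ∈ img, ∑ y ∈ imgᶜ, c' j x y := by
      rw [← Finset.sum_add_distrib]
      exact Finset.sum_congr rfl (fun x _ => (Finset.sum_add_sum_compl img (c' j x)).symm)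
    have hXle : ∑ x ∈ img, ∑ y ∈ imgᶜ, c' j x y ≤ (r * a) * 2 := by
      calc ∑ x ∈ img, ∑ y ∈ imgᶜ, c' j x y
          ≤ ∑ x : KV (p+r) a, ∑ y ∈ imgᶜ, c' j x y :=
            Finset.sum_le_sum_of_subset (Finset.subset_univ _)
        _ = ∑ y ∈ imgᶜ, ∑ x : KV (p+r) a, c' j x y := Finset.sum_comm
        _ = ∑ y ∈ imgᶜ, mdeg (c' j) y := by
            refine Finset.sum_congr rfl (fun y _ => ?_)
            unfold mdeg
            exact Finset.sum_congr rfl (fun x _ => hsym' j x y)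
        _ = (r * a) * 2 :=
            (Finset.sum_congr rfl (fun y _ => hdm' j y)).trans
              (by rw [Finset.sum_const, hcardcompl, smul_eq_mul])
    have hTsum : ∑ x ∈ img, ∑ y ∈ img, c' j x y = ∑ v : KV p a, mdeg (c j) v := by
      rw [hsum_img]
      exact Finset.sum_congr rfl (fun u _ => (hmdeg_img j u).symm)
    have hfinal : numComp (c j) = Fintype.card (supp (c j)).ConnectedComponent := by
      unfold numComp
      exact Nat.card_eq_fintype_card
    have hstep1 : (∑ v : KV p a, mdeg (c j) v) + (r * a) * 2 + (r * a) * 2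
        ≥ ((p+r) * a) * 2 := by omega
    have hstep2 : 2 * Fintype.card (supp (c j)).ConnectedComponent ≤ 2 * (a * r) := by
      rw [Nat.mul_comm a r]
      omega
    rw [hfinal]
    omega
end

section
/- Let C be a Hamiltonian cycle of a graph whose vertex set V is partitioned into q ≥ 2 nonempty parts. Then C contains at least q edges whose endpoints lie in different parts. Consequently, in any Hamiltonian decomposition of K(a^{(q)};λ,μ) with a > 1, each Hamiltonian cycle uses at least q mixed edges, and hence λ ≤ μa(q−1) is necessary for K(a^{(q)};λ,μ) to admit a Hamiltonian decomposition. -/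
open Finset

lemma hcmb_even_inner_sum {V : Type} [DecidableEq V] (w : V → V → ℕ)
    (hsymm : ∀ u v, w u v = w v u) (hdiag : ∀ v, w v v = 0) (S : Finset V) :
    Even (∑ u ∈ S, ∑ v ∈ S, w u v) := by
  induction S using Finset.induction_on with
  | empty => simp
  | insert a S ha ih =>
    obtain ⟨m, hm⟩ := ih
    refine ⟨(∑ v ∈ S, w a v) + m, ?_⟩
    rw [Finset.sum_insert ha, Finset.sum_insert ha,
      Finset.sum_congr rfl (fun u (_ : u ∈ S) => Finset.sum_insert ha),
      Finset.sum_add_distrib, hdiag,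
      Finset.sum_congr rfl (fun u (_ : u ∈ S) => hsymm u a)]
    have : S.sum (w a) = ∑ v ∈ S, w a v := rfl
    omega

lemma hcmb_cut_two {V : Type} [Fintype V] [DecidableEq V] (w : V → V → ℕ)
    (hsymm : ∀ u v, w u v = w v u) (hdiag : ∀ v, w v v = 0)
    (hham : IsHamCycle w) (S : Finset V) (hS : S.Nonempty) (hS' : Sᶜ.Nonempty) :
    2 ≤ ∑ u ∈ S, ∑ v ∈ Sᶜ, w u v := by
  have hsum : (∑ u ∈ S, ∑ v ∈ S, w u v) + (∑ u ∈ S, ∑ v ∈ Sᶜ, w u v) = 2 * S.card := by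
    rw [← Finset.sum_add_distrib]
    calc ∑ u ∈ S, ((∑ v ∈ S, w u v) + ∑ v ∈ Sᶜ, w u v)
        = ∑ u ∈ S, mdeg w u :=
          Finset.sum_congr rfl fun u _ => Finset.sum_add_sum_compl S (w u)
      _ = ∑ _u ∈ S, 2 := Finset.sum_congr rfl fun u _ => hham.2 u
      _ = 2 * S.card := by rw [Finset.sum_const, smul_eq_mul, mul_comm]
  obtain ⟨m, hm⟩ := hcmb_even_inner_sum w hsymm hdiag S
  obtain ⟨x, hx⟩ := hS
  obtain ⟨y, hy⟩ := hS'
  obtain ⟨p⟩ := hham.1.preconnected x y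
  obtain ⟨d, _, hd1, hd2⟩ := p.exists_boundary_dart (↑S : Set V)
    (by simpa using hx) (by simpa using Finset.mem_compl.mp hy)
  have hadj := d.adj
  have hw : 1 ≤ w d.fst d.snd := by
    rcases hadj.2 with h | h
    · exact h
    · rw [hsymm]; exact h
  have h1 : 1 ≤ ∑ v ∈ Sᶜ, w d.fst v :=
    le_trans hw (Finset.single_le_sum (f := fun v => w d.fst v)
      (fun _ _ => Nat.zero_le _) (Finset.mem_compl.mpr (by simpa using hd2)))
  have h2 : 1 ≤ ∑ u ∈ S, ∑ v ∈ Sᶜ, w u v :=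
    le_trans h1 (Finset.single_le_sum (f := fun u => ∑ v ∈ Sᶜ, w u v)
      (fun _ _ => Nat.zero_le _) (by simpa using hd1))
  omega

lemma hcmb_sum_ite_count {α : Type} [Fintype α] [DecidableEq α] (b : α) (X Y : ℕ) :
    ∑ x : α, (if x = b then X else Y) = X + (Fintype.card α - 1) * Y := by
  rw [Finset.sum_eq_sum_sdiff_singleton_add (Finset.mem_univ b)]
  rw [Finset.sum_congr rfl (fun x hx => if_neg (by simp at hx; exact hx))]
  simp [Finset.card_sdiff_of_subset, mul_comm, add_comm]

lemma hcmb_part1 : ∀ (V : Type) [Fintype V] (q : ℕ), 2 ≤ q →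
      ∀ f : V → Fin q, Function.Surjective f →
      ∀ w : V → V → ℕ, (∀ u v, w u v = w v u) → (∀ v, w v v = 0) →
      IsHamCycle w →
      2 * q ≤ ∑ u, ∑ v, if f u ≠ f v then w u v else 0 := by
  intro V _ q hq f hf w hsymm hdiag hham
  classical
  have key : ∀ i : Fin q,
      2 ≤ ∑ u ∈ univ.filter (fun u => f u = i), ∑ v ∈ (univ.filter (fun u => f u = i))ᶜ, w u v := by
    intro i
    apply hcmb_cut_two w hsymm hdiag hham
    · obtain ⟨u, hu⟩ := hf i
      exact ⟨u, by simp [hu]⟩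
    · have hnt : Nontrivial (Fin q) := Fin.nontrivial_iff_two_le.mpr hq
      obtain ⟨i', hi'⟩ := exists_ne i
      obtain ⟨u, hu⟩ := hf i'
      exact ⟨u, by simp [hu, hi']⟩
  calc 2 * q = ∑ _i : Fin q, 2 := by simp [mul_comm]
    _ ≤ ∑ i : Fin q, ∑ u ∈ univ.filter (fun u => f u = i),
          ∑ v ∈ (univ.filter (fun u => f u = i))ᶜ, w u v :=
        Finset.sum_le_sum fun i _ => key i
    _ = ∑ i : Fin q, ∑ u ∈ univ.filter (fun u => f u = i),
          ∑ v, if f u ≠ f v then w u v else 0 := by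
        refine Finset.sum_congr rfl fun i _ => Finset.sum_congr rfl fun u hu => ?_
        have hfu : f u = i := (Finset.mem_filter.mp hu).2
        rw [Finset.compl_filter, Finset.sum_filter]
        refine Finset.sum_congr rfl fun v _ => ?_
        refine if_congr ?_ rfl rfl
        rw [hfu]
        exact not_congr eq_comm
    _ = ∑ u, ∑ v, if f u ≠ f v then w u v else 0 :=
        Finset.sum_fiberwise univ f _

lemma hcmb_part2 : ∀ a q lam mu k : ℕ, 1 < a → 2 ≤ q →
      ∀ c : Fin k → KV q a → KV q a → ℕ,
        KColoring q a lam mu k c → (∀ j, IsHamCycle (c j)) →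
        ∀ j, 2 * q ≤ mixedPairSum q a (c j) := by
  intro a q lam mu k ha hq c hc hham j
  have hdiag : ∀ v, c j v v = 0 := by
    intro v
    have h0 : ∑ j', c j' v v = 0 := by
      rw [hc.2 v v]; simp [Kmult]
    exact Finset.sum_eq_zero_iff.mp h0 j (Finset.mem_univ j)
  have hsurj : Function.Surjective (Prod.fst : KV q a → Fin q) :=
    fun i => ⟨(i, ⟨0, by omega⟩), rfl⟩
  exact hcmb_part1 (KV q a) q hq Prod.fst hsurj (c j) (hc.1 j) hdiag (hham j)

lemma hcmb_kmult_row (q a lam mu : ℕ) (ha : 0 < a) (hq : 0 < q) (v : KV q a) :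
    ∑ u, Kmult q a lam mu v u = (a - 1) * lam + (q - 1) * (a * mu) := by
  obtain ⟨v1, v2⟩ := v
  rw [Fintype.sum_prod_type]
  have hrow : ∀ i : Fin q, (∑ x : Fin a, Kmult q a lam mu (v1, v2) (i, x)) =
      if i = v1 then (a - 1) * lam else a * mu := by
    intro i
    by_cases h : i = v1
    · subst h
      rw [if_pos rfl]
      have : ∀ x : Fin a, Kmult q a lam mu (i, v2) (i, x) = if x = v2 then 0 else lam := by
        intro x
        simp only [Kmult, Prod.mk.injEq, true_and]
        by_cases hx : x = v2
        · simp [hx]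
        · rw [if_neg fun hh => hx hh.symm, if_pos trivial, if_neg hx]
      rw [Finset.sum_congr rfl fun x _ => this x, hcmb_sum_ite_count]
      simp
    · rw [if_neg h]
      have h' : ¬v1 = i := fun hh => h hh.symm
      have : ∀ x : Fin a, Kmult q a lam mu (v1, v2) (i, x) = mu := by
        intro x
        simp [Kmult, Prod.mk.injEq, h']
      rw [Finset.sum_congr rfl fun x _ => this x]
      simp [mul_comm]
  rw [Finset.sum_congr rfl fun i _ => hrow i, hcmb_sum_ite_count]
  simp

lemma hcmb_mixed_row (q a lam mu : ℕ) (u : KV q a) :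
    ∑ v : KV q a, (if u.1 ≠ v.1 then Kmult q a lam mu u v else 0) = (q - 1) * (a * mu) := by
  obtain ⟨u1, u2⟩ := u
  rw [Fintype.sum_prod_type]
  have hrow : ∀ i : Fin q,
      (∑ x : Fin a, if ((u1, u2) : KV q a).1 ≠ ((i, x) : KV q a).1
        then Kmult q a lam mu (u1, u2) (i, x) else 0) = if i = u1 then 0 else a * mu := by
    intro i
    by_cases h : i = u1
    · simp [h]
    · rw [if_neg h]
      have h' : ¬u1 = i := fun hh => h hh.symm
      have hx : ∀ x : Fin a,
          (if (u1 : Fin q) ≠ i then Kmult q a lam mu (u1, u2) (i, x) else 0) = mu := by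
        intro x
        rw [if_pos h']
        simp [Kmult, Prod.mk.injEq, h']
      rw [Finset.sum_congr rfl fun x _ => hx x]
      simp [mul_comm]
  rw [Finset.sum_congr rfl fun i _ => hrow i, hcmb_sum_ite_count]
  simp

lemma hcmb_part3 : ∀ a q lam mu k : ℕ, 1 < a → 2 ≤ q →
      (∃ c : Fin k → KV q a → KV q a → ℕ,
        KColoring q a lam mu k c ∧ ∀ j, IsHamCycle (c j)) →
      lam ≤ mu * a * (q - 1) := by
  intro a q lam mu k ha hq hc'
  obtain ⟨c, hc, hham⟩ := hc'
  have hq0 : 0 < q := by omega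
  have ha0 : 0 < a := by omega
  set v0 : KV q a := (⟨0, hq0⟩, ⟨0, ha0⟩) with hv0
  have hdeg : 2 * k = (a - 1) * lam + (q - 1) * (a * mu) := by
    calc 2 * k = ∑ _j : Fin k, 2 := by simp [mul_comm]
      _ = ∑ j, mdeg (c j) v0 := Finset.sum_congr rfl fun j _ => ((hham j).2 v0).symm
      _ = ∑ u, ∑ j, c j v0 u := Finset.sum_comm
      _ = ∑ u, Kmult q a lam mu v0 u := Finset.sum_congr rfl fun u _ => hc.2 v0 u
      _ = (a - 1) * lam + (q - 1) * (a * mu) := hcmb_kmult_row q a lam mu ha0 hq0 v0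
  have hmix : ∑ j, mixedPairSum q a (c j) = (q * a) * ((q - 1) * (a * mu)) := by
    have hsw : ∀ u v : KV q a, (∑ j, if u.1 ≠ v.1 then c j u v else 0) =
        (if u.1 ≠ v.1 then Kmult q a lam mu u v else 0) := by
      intro u v
      split
      · exact hc.2 u v
      · simp
    calc ∑ j, mixedPairSum q a (c j)
        = ∑ u, ∑ v, ∑ j, (if u.1 ≠ v.1 then c j u v else 0) := by
          unfold mixedPairSum
          rw [Finset.sum_comm]
          exact Finset.sum_congr rfl fun u _ => Finset.sum_comm
      _ = ∑ u : KV q a, ∑ v, (if u.1 ≠ v.1 then Kmult q a lam mu u v else 0) :=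
          Finset.sum_congr rfl fun u _ => Finset.sum_congr rfl fun v _ => hsw u v
      _ = ∑ _u : KV q a, (q - 1) * (a * mu) :=
          Finset.sum_congr rfl fun u _ => hcmb_mixed_row q a lam mu u
      _ = (q * a) * ((q - 1) * (a * mu)) := by simp [mul_comm, mul_assoc, mul_left_comm]
  have hge : 2 * q * k ≤ ∑ j, mixedPairSum q a (c j) := by
    calc 2 * q * k = ∑ _j : Fin k, 2 * q := by simp [mul_comm]
      _ ≤ _ := Finset.sum_le_sum fun j _ => hcmb_part2 a q lam mu k ha hq c hc hham j
  rw [hmix] at hge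
  obtain ⟨b, rfl⟩ : ∃ b, a = b + 1 := ⟨a - 1, by omega⟩
  obtain ⟨r, rfl⟩ : ∃ r, q = r + 1 := ⟨q - 1, by omega⟩
  have hb : 1 ≤ b := by omega
  have hr : 1 ≤ r := by omega
  simp only [Nat.add_sub_cancel] at hdeg hge ⊢
  have key : b * lam + r * ((b + 1) * mu) ≤ (b + 1) * (r * ((b + 1) * mu)) := by
    have h1 : (r + 1) * (b * lam + r * ((b + 1) * mu)) ≤
        (r + 1) * ((b + 1) * (r * ((b + 1) * mu))) := by
      calc (r + 1) * (b * lam + r * ((b + 1) * mu)) = 2 * (r + 1) * k := by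
            rw [← hdeg]; ring
        _ ≤ ((r + 1) * (b + 1)) * (r * ((b + 1) * mu)) := by
            calc 2 * (r + 1) * k = 2 * (r + 1) * k := rfl
              _ ≤ _ := hge
        _ = (r + 1) * ((b + 1) * (r * ((b + 1) * mu))) := by ring
    exact Nat.le_of_mul_le_mul_left h1 (by omega)
  have key2 : b * lam ≤ b * (r * ((b + 1) * mu)) := by nlinarith
  have := Nat.le_of_mul_le_mul_left key2 (by omega : 0 < b)
  calc lam ≤ r * ((b + 1) * mu) := this
    _ = mu * (b + 1) * r := by ring

/-- A Hamiltonian cycle of a graph whose vertex set is partitioned into `q ≥ 2`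
nonempty parts contains at least `q` edges with endpoints in different parts
(counted here as ordered pairs, hence `2q`).  Consequently, in any Hamiltonian
decomposition of `K(a^{(q)};λ,μ)` with `a > 1` each Hamiltonian cycle uses at
least `q` mixed edges, and hence `λ ≤ μa(q−1)` is necessary for
`K(a^{(q)};λ,μ)` to admit a Hamiltonian decomposition. -/
theorem ham_cycle_mixed_edges_bound :
    (∀ (V : Type) [Fintype V] (q : ℕ), 2 ≤ q →
      ∀ f : V → Fin q, Function.Surjective f →
      ∀ w : V → V → ℕ, (∀ u v, w u v = w v u) → (∀ v, w v v = 0) →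
      IsHamCycle w →
      2 * q ≤ ∑ u, ∑ v, if f u ≠ f v then w u v else 0) ∧
    (∀ a q lam mu k : ℕ, 1 < a → 2 ≤ q →
      ∀ c : Fin k → KV q a → KV q a → ℕ,
        KColoring q a lam mu k c → (∀ j, IsHamCycle (c j)) →
        ∀ j, 2 * q ≤ mixedPairSum q a (c j)) ∧
    (∀ a q lam mu k : ℕ, 1 < a → 2 ≤ q →
      (∃ c : Fin k → KV q a → KV q a → ℕ,
        KColoring q a lam mu k c ∧ ∀ j, IsHamCycle (c j)) →
      lam ≤ mu * a * (q - 1)) := by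
  exact ⟨hcmb_part1, hcmb_part2, hcmb_part3⟩
end

section
/- In any Hamiltonian decomposition of K(a^{(q)};λ,μ) with a > 1, μ ≥ 1 and λ = μa(q−1), each Hamiltonian cycle contains exactly a−1 pure edges from each of the q parts and exactly q mixed edges. -/
open Finset

lemma even_double_sum {α : Type*} [DecidableEq α] (s : Finset α) (f : α → α → ℕ)
    (hsym : ∀ x y, f x y = f y x) (hdiag : ∀ x, f x x = 0) :
    2 ∣ ∑ x ∈ s, ∑ y ∈ s, f x y := by
  classical
  induction s using Finset.induction_on with
  | empty => simp
  | @insert b s hb ih =>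
    rw [Finset.sum_insert hb, Finset.sum_insert hb]
    rw [Finset.sum_congr rfl (fun x (_ : x ∈ s) => Finset.sum_insert hb (f := f x))]
    rw [Finset.sum_add_distrib, hdiag]
    rw [Finset.sum_congr rfl (fun x (_ : x ∈ s) => hsym x b)]
    have hh : s.sum (f b) = ∑ x ∈ s, f b x := rfl
    rw [hh]
    omega

lemma sum_ite_ne {α : Type*} [Fintype α] [DecidableEq α] (i : α) (t : ℕ) :
    ∑ p : α, (if p ≠ i then t else 0) = (Fintype.card α - 1) * t := by
  have h2 : ∑ p : α, ((if p = i then t else 0) + (if p ≠ i then t else 0))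
      = Fintype.card α * t := by
    have h3 : ∀ p : α, (if p = i then t else 0) + (if p ≠ i then t else 0) = t := by
      intro p; by_cases h : p = i <;> simp [h]
    simp only [h3, Finset.sum_const, Finset.card_univ, smul_eq_mul]
  rw [Finset.sum_add_distrib] at h2
  simp only [Finset.sum_ite_eq', Finset.mem_univ, if_true] at h2
  have hc : 1 ≤ Fintype.card α := Fintype.card_pos_iff.mpr ⟨i⟩
  rw [Nat.sub_one_mul]
  omega

lemma add_sum_ne {α : Type*} [Fintype α] [DecidableEq α] (g : α → ℕ) (i : α) :
    g i + ∑ p : α, (if p ≠ i then g p else 0) = ∑ p : α, g p := by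
  have h1 : g i = ∑ p : α, (if p = i then g p else 0) := by simp
  rw [h1, ← Finset.sum_add_distrib]
  exact Finset.sum_congr rfl fun p _ => by by_cases h : p = i <;> simp [h]

def mixedAt (q a : ℕ) (w : KV q a → KV q a → ℕ) (i : Fin q) : ℕ :=
  ∑ x : Fin a, ∑ v : KV q a, if v.1 ≠ i then w (i, x) v else 0

lemma partDegSplit (q a : ℕ) (w : KV q a → KV q a → ℕ)
    (hdeg : ∀ v, mdeg w v = 2) (i : Fin q) :
    purePairSum q a w i + mixedAt q a w i = 2 * a := by
  unfold purePairSum mixedAt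
  rw [← Finset.sum_add_distrib]
  have hx : ∀ x : Fin a, (∑ y : Fin a, w (i,x) (i,y))
      + (∑ v : KV q a, if v.1 ≠ i then w (i,x) v else 0) = 2 := by
    intro x
    have hd := hdeg (i, x)
    unfold mdeg at hd
    rw [Fintype.sum_prod_type] at hd
    rw [← hd]
    have hsecond : (∑ v : KV q a, if v.1 ≠ i then w (i,x) v else 0)
        = ∑ p : Fin q, (if p ≠ i then ∑ y : Fin a, w (i,x) (p,y) else 0) := by
      rw [Fintype.sum_prod_type]
      exact Finset.sum_congr rfl fun p _ => by by_cases h : p = i <;> simp [h]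
    rw [hsecond]
    exact add_sum_ne (fun p => ∑ y, w (i,x) (p,y)) i
  rw [Finset.sum_congr rfl (fun x (_ : x ∈ Finset.univ) => hx x)]
  simp [Finset.sum_const, Finset.card_univ, mul_comm]

lemma splitC (q a : ℕ) (w : KV q a → KV q a → ℕ) :
    mixedPairSum q a w = ∑ i : Fin q, mixedAt q a w i := by
  unfold mixedPairSum mixedAt
  rw [Fintype.sum_prod_type]
  refine Finset.sum_congr rfl fun i _ => Finset.sum_congr rfl fun x _ =>
    Finset.sum_congr rfl fun v _ => ?_
  by_cases h : v.1 = i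
  · simp [h]
  · simp [h, Ne.symm h]

lemma mixedAt_pos (q a : ℕ) (hq : 2 ≤ q) (ha : 0 < a) (w : KV q a → KV q a → ℕ)
    (hwsym : ∀ u v, w u v = w v u) (hconn : (supp w).Connected) (i : Fin q) :
    1 ≤ mixedAt q a w i := by
  by_contra h
  have hM0 : mixedAt q a w i = 0 := by omega
  have hzero : ∀ u v : KV q a, u.1 = i → v.1 ≠ i → w u v = 0 := by
    intro u v hu hv
    unfold mixedAt at hM0
    rw [Finset.sum_eq_zero_iff] at hM0
    have h1 := hM0 u.2 (Finset.mem_univ _)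
    rw [Finset.sum_eq_zero_iff] at h1
    have h2 := h1 v (Finset.mem_univ _)
    rw [if_pos hv] at h2
    have he : (i, u.2) = u := by rw [← hu]
    rwa [he] at h2
  obtain ⟨i', hi'⟩ := Fintype.exists_ne_of_one_lt_card (by simp; omega) i
  have hwalk : ∀ (u v : KV q a), (supp w).Walk u v → u.1 = i → v.1 = i := by
    intro u v p
    induction p with
    | nil => exact id
    | @cons x y z hadj p ih =>
      intro hu
      apply ih
      by_contra hb
      have hpos : 0 < w x y := by
        rcases hadj.2 with hh | hh
        · exact hh
        · rwa [hwsym y x] at hh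
      have := hzero x y hu hb
      omega
  obtain ⟨p⟩ := hconn.preconnected (i, ⟨0, ha⟩) (i', ⟨0, ha⟩)
  exact hi' (hwalk _ _ p rfl)

lemma Kmult_deg (q a lam mu : ℕ) (v0 : KV q a) :
    ∑ u : KV q a, Kmult q a lam mu v0 u = (a - 1) * lam + (q - 1) * (a * mu) := by
  rw [Fintype.sum_prod_type]
  have hp : ∀ p : Fin q, (∑ y : Fin a, Kmult q a lam mu v0 (p, y))
      = if p = v0.1 then (a - 1) * lam else a * mu := by
    intro p
    by_cases h : p = v0.1
    · rw [if_pos h]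
      have he : ∀ y : Fin a, Kmult q a lam mu v0 (p, y) = if y ≠ v0.2 then lam else 0 := by
        intro y
        unfold Kmult
        by_cases hy : y = v0.2
        · have : v0 = (p, y) := by rw [h, hy]
          rw [if_pos this]
          simp [hy]
        · have h1 : v0 ≠ (p, y) := by
            intro hh; exact hy (by rw [hh])
          rw [if_neg h1, if_pos (by rw [h]), if_pos hy]
      rw [Finset.sum_congr rfl fun y _ => he y, sum_ite_ne]
      simp
    · rw [if_neg h]
      have he : ∀ y : Fin a, Kmult q a lam mu v0 (p, y) = mu := by
        intro y
        unfold Kmult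
        rw [if_neg (fun hh => h (by rw [hh])), if_neg (fun hh => h hh.symm)]
      rw [Finset.sum_congr rfl fun y _ => he y]
      simp [mul_comm]
  rw [Finset.sum_congr rfl fun p _ => hp p]
  have hsplit : ∀ p : Fin q, (if p = v0.1 then (a-1)*lam else a*mu)
      = (if p = v0.1 then (a-1)*lam else 0) + (if p ≠ v0.1 then a*mu else 0) := by
    intro p; by_cases h : p = v0.1 <;> simp [h]
  rw [Finset.sum_congr rfl fun p _ => hsplit p, Finset.sum_add_distrib]
  congr 1
  · simp
  · rw [sum_ite_ne]; simp

/-- In any Hamiltonian decomposition of `K(a^{(q)};λ,μ)` with `a > 1`, `μ ≥ 1`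
and `λ = μa(q−1)`, each Hamiltonian cycle contains exactly `a−1` pure edges
from each of the `q` parts and exactly `q` mixed edges.  (Pure/mixed edge
counts are recorded doubled, as ordered-pair sums.) -/
theorem extremal_ham_cycle_edge_counts
    (a q mu k : ℕ) (ha : 1 < a) (hq : 1 ≤ q) (hmu : 1 ≤ mu)
    (c : Fin k → KV q a → KV q a → ℕ)
    (hc : KColoring q a (mu * a * (q - 1)) mu k c)
    (hham : ∀ j, IsHamCycle (c j)) :
    ∀ j, (∀ i, purePairSum q a (c j) i = 2 * (a - 1)) ∧
      mixedPairSum q a (c j) = 2 * q := by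
  obtain ⟨hcsym, hcsum⟩ := hc
  have ha0 : 0 < a := by omega
  have hle : ∀ j u v, c j u v ≤ Kmult q a (mu * a * (q - 1)) mu u v := by
    intro j u v
    rw [← hcsum u v]
    exact Finset.single_le_sum (f := fun j' => c j' u v)
      (fun _ _ => Nat.zero_le _) (Finset.mem_univ j)
  have hdiag : ∀ j (v : KV q a), c j v v = 0 := by
    intro j v
    have h := hle j v v
    simpa [Kmult] using h
  intro j
  rcases Nat.lt_or_ge q 2 with hq2 | hq2
  · -- q = 1 : contradiction
    exfalso
    have hq1 : q = 1 := by omega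
    subst hq1
    have h2 := (hham j).2 (0, ⟨0, ha0⟩)
    have h0 : mdeg (c j) (0, ⟨0, ha0⟩) = 0 := by
      unfold mdeg
      apply Finset.sum_eq_zero
      intro u _
      have h := hle j (0, ⟨0, ha0⟩) u
      have hfst : ((0 : Fin 1), (⟨0, ha0⟩ : Fin a)).1 = u.1 := Subsingleton.elim _ _
      unfold Kmult at h
      rw [if_pos hfst] at h
      have hz : (if ((0 : Fin 1), (⟨0, ha0⟩ : Fin a)) = u then 0
          else mu * a * (1 - 1)) = 0 := by
        split <;> simp
      omega
    omega
  · -- main case q ≥ 2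
    -- lower bound 2 ≤ mixedAt for every color and part
    have h2all : ∀ (j' : Fin k) (i : Fin q), 2 ≤ mixedAt q a (c j') i := by
      intro j' i
      have h1 := mixedAt_pos q a hq2 ha0 (c j') (hcsym j') (hham j').1 i
      have hB := partDegSplit q a (c j') (hham j').2 i
      have hev : 2 ∣ purePairSum q a (c j') i :=
        even_double_sum Finset.univ (fun x y => c j' (i,x) (i,y))
          (fun x y => hcsym j' _ _) (fun x => hdiag j' _)
      omega
    have hMlow : ∀ j', 2 * q ≤ mixedPairSum q a (c j') := by
      intro j'
      rw [splitC]
      calc (2 * q : ℕ) = ∑ _i : Fin q, 2 := by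
            simp [Finset.sum_const, Finset.card_univ, mul_comm]
        _ ≤ _ := Finset.sum_le_sum (fun i _ => h2all j' i)
    -- the vertex degree identity: 2k = deg of any vertex in Kmult
    have hk2 : k * 2 = (a - 1) * (mu * a * (q - 1)) + (q - 1) * (a * mu) := by
      have hv0 : (KV q a) := ((⟨0, by omega⟩ : Fin q), (⟨0, ha0⟩ : Fin a))
      calc k * 2 = ∑ _j' : Fin k, 2 := by simp [Finset.sum_const]
        _ = ∑ j' : Fin k, mdeg (c j') hv0 := by
            exact Finset.sum_congr rfl fun j' _ => ((hham j').2 hv0).symm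
        _ = ∑ u : KV q a, ∑ j' : Fin k, c j' hv0 u := by
            unfold mdeg; rw [Finset.sum_comm]
        _ = ∑ u : KV q a, Kmult q a (mu * a * (q - 1)) mu hv0 u :=
            Finset.sum_congr rfl fun u _ => hcsum hv0 u
        _ = (a - 1) * (mu * a * (q - 1)) + (q - 1) * (a * mu) :=
            Kmult_deg q a (mu * a * (q - 1)) mu hv0
    -- total mixed pair count
    have hmixtot : ∑ j' : Fin k, mixedPairSum q a (c j')
        = (q * a) * ((q - 1) * (a * mu)) := by
      unfold mixedPairSum
      rw [Finset.sum_comm]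
      have hu : ∀ u : KV q a, (∑ j' : Fin k, ∑ v : KV q a,
          if u.1 ≠ v.1 then c j' u v else 0) = (q - 1) * (a * mu) := by
        intro u
        rw [Finset.sum_comm]
        have hv : ∀ v : KV q a, (∑ j' : Fin k, if u.1 ≠ v.1 then c j' u v else 0)
            = if v.1 ≠ u.1 then mu else 0 := by
          intro v
          by_cases h : u.1 = v.1
          · simp [h]
          · rw [Finset.sum_congr rfl fun j' (_ : j' ∈ Finset.univ) => if_pos h,
              if_pos (Ne.symm h), hcsum u v]
            unfold Kmult
            rw [if_neg (fun hh => h (by rw [hh])), if_neg h]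
        rw [Finset.sum_congr rfl fun v _ => hv v, Fintype.sum_prod_type]
        have hw : ∀ p : Fin q, (∑ _y : Fin a, if p ≠ u.1 then mu else 0)
            = if p ≠ u.1 then a * mu else 0 := by
          intro p; by_cases h : p = u.1 <;> simp [h, mul_comm]
        rw [Finset.sum_congr rfl fun p _ => hw p, sum_ite_ne]
        simp
      rw [Finset.sum_congr rfl fun u _ => hu u]
      simp [Finset.sum_const, Finset.card_univ]
    -- equality of totals forces each mixedPairSum = 2q
    have htot : ∑ _j' : Fin k, (2 * q) = ∑ j' : Fin k, mixedPairSum q a (c j') := by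
      rw [hmixtot, Finset.sum_const, Finset.card_univ, Fintype.card_fin, smul_eq_mul]
      obtain ⟨a1, rfl⟩ : ∃ m, a = m + 2 := ⟨a - 2, by omega⟩
      obtain ⟨q1, rfl⟩ : ∃ m, q = m + 2 := ⟨q - 2, by omega⟩
      have e1 : a1 + 2 - 1 = a1 + 1 := by omega
      have e2 : q1 + 2 - 1 = q1 + 1 := by omega
      rw [e1, e2] at hk2
      rw [e2]
      have hstep : k * (2 * (q1 + 2)) = (k * 2) * (q1 + 2) := by ring
      rw [hstep, hk2]
      ring
    have hMeq : ∀ j', mixedPairSum q a (c j') = 2 * q := by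
      have h := (Finset.sum_eq_sum_iff_of_le (fun j' (_ : j' ∈ Finset.univ) =>
        hMlow j')).mp htot
      intro j'
      exact (h j' (Finset.mem_univ _)).symm
    -- now fix j and force each mixedAt = 2
    have hsumMi : ∑ _i : Fin q, (2 : ℕ) = ∑ i : Fin q, mixedAt q a (c j) i := by
      rw [← splitC, hMeq j, Finset.sum_const, Finset.card_univ, Fintype.card_fin,
        smul_eq_mul, mul_comm]
    have hMiEq : ∀ i, mixedAt q a (c j) i = 2 := by
      have h := (Finset.sum_eq_sum_iff_of_le (fun i (_ : i ∈ Finset.univ) =>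
        h2all j i)).mp hsumMi
      intro i
      exact (h i (Finset.mem_univ _)).symm
    refine ⟨fun i => ?_, hMeq j⟩
    have hB := partDegSplit q a (c j) (hham j).2 i
    have hM := hMiEq i
    omega
end
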